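/- Let G_{d₁,d₂,1} = ⟨ℓ_x, u | [ℓ_x, uℓ_xu] = 1, ℓ_x^{d₁} = (uℓ_xu)^{d₂} = 1⟩ with gcd(d₁, d₂) = 1. Then G_{d₁,d₂,1} is abelian, and it is cyclic of order 2d₁d₂. -/

import Mathlib

/-- Relations of G_{d₁,d₂,1} = ⟨ℓ_x, u | [ℓ_x, uℓ_xu] = 1, ℓ_x^{d₁} = (uℓ_xu)^{d₂} = 1⟩,
with ℓ_x = generator 0 and u = generator 1. -/
def orbifoldRels (d₁ d₂ : ℕ) : Set (FreeGroup (Fin 2)) :=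
  let x : FreeGroup (Fin 2) := FreeGroup.of 0
  let u : FreeGroup (Fin 2) := FreeGroup.of 1
  {x * (u * x * u) * x⁻¹ * (u * x * u)⁻¹, x ^ d₁, (u * x * u) ^ d₂}

/-- With gcd(d₁,d₂) = 1, the group G_{d₁,d₂,1} is abelian and cyclic of order 2d₁d₂. -/
theorem orbifold_group_cyclic (d₁ d₂ : ℕ) (h₁ : 0 < d₁) (h₂ : 0 < d₂)
    (h : Nat.Coprime d₁ d₂) :
    (∀ a b : PresentedGroup (orbifoldRels d₁ d₂), a * b = b * a) ∧
    IsCyclic (PresentedGroup (orbifoldRels d₁ d₂)) ∧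
    Nat.card (PresentedGroup (orbifoldRels d₁ d₂)) = 2 * d₁ * d₂ := by
  classical
  set n : ℕ := 2 * d₁ * d₂ with hn
  have hn0 : n ≠ 0 := by positivity
  haveI : NeZero n := ⟨hn0⟩
  set a : ℤ := Nat.gcdA d₁ d₂ with ha
  set b : ℤ := Nat.gcdB d₁ d₂ with hb
  have hbez : (d₁:ℤ) * a + (d₂:ℤ) * b = 1 := by
    have := Nat.gcd_eq_gcd_ab d₁ d₂
    rw [h, Nat.cast_one] at this
    linarith
  set G := PresentedGroup (orbifoldRels d₁ d₂) with hG
  set x : G := PresentedGroup.of 0 with hxdef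
  set u : G := PresentedGroup.of 1 with hudef
  set w : G := u * x * u with hwdef
  set v : G := x⁻¹ * u⁻¹ with hvdef
  -- the relations hold in G
  have hrel : ∀ r ∈ orbifoldRels d₁ d₂, PresentedGroup.mk (orbifoldRels d₁ d₂) r = 1 :=
    fun r hr => (QuotientGroup.eq_one_iff r).mpr (Subgroup.subset_normalClosure hr)
  have h1 : x * w * x⁻¹ * w⁻¹ = 1 := by
    have := hrel _ (show _ ∈ orbifoldRels d₁ d₂ from Set.mem_insert _ _)
    simp only [map_mul, map_inv] at this
    exact this
  have h2 : x ^ d₁ = 1 := by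
    have := hrel _ (show _ ∈ orbifoldRels d₁ d₂ from
      Set.mem_insert_of_mem _ (Set.mem_insert _ _))
    simpa [hxdef, PresentedGroup.of] using this
  have h3 : w ^ d₂ = 1 := by
    have := hrel _ (show _ ∈ orbifoldRels d₁ d₂ from
      Set.mem_insert_of_mem _ (Set.mem_insert_of_mem _ rfl))
    simpa [hxdef, hudef, hwdef, PresentedGroup.of] using this
  have hc : Commute x w := by
    have h' := mul_inv_eq_one.mp h1
    show x * w = w * x
    conv_rhs => rw [← h']
    group
  have hcinv : Commute x⁻¹ w⁻¹ := hc.inv_inv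
  have hv2 : v ^ 2 = x⁻¹ * w⁻¹ := by rw [pow_two, hvdef, hwdef]; group
  -- v ^ n = 1
  have hvn : v ^ n = 1 := by
    have : v ^ n = (v ^ 2) ^ (d₁ * d₂) := by rw [← pow_mul, hn, mul_assoc]
    rw [this, hv2, hcinv.mul_pow, inv_pow, inv_pow, pow_mul, h2, one_pow, inv_one, one_mul,
      mul_comm d₁ d₂, pow_mul, h3, one_pow, inv_one]
  -- x is a power of v
  have hkey : (v ^ 2) ^ d₂ * x ^ d₂ = 1 := by
    rw [hv2, hcinv.mul_pow, inv_pow, inv_pow, h3, inv_one, mul_one, inv_mul_cancel]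
  have e1 : x ^ (d₂:ℤ) = v ^ (-(2 * (d₂:ℤ))) := by
    have h4 : x ^ d₂ = ((v ^ 2) ^ d₂)⁻¹ := (inv_eq_of_mul_eq_one_right hkey).symm
    rw [zpow_natCast, h4, ← pow_mul, ← zpow_natCast v (2 * d₂), ← zpow_neg]
    norm_num
  have hx : x = v ^ (-(2 * (d₂:ℤ)) * b) := by
    have hx1 : x = x ^ ((d₁:ℤ) * a + (d₂:ℤ) * b) := by rw [hbez, zpow_one]
    rw [hx1, zpow_add, zpow_mul, zpow_mul, zpow_natCast, h2, one_zpow, one_mul, e1, ← zpow_mul]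
  have hxmem : x ∈ Subgroup.zpowers v := ⟨_, hx.symm⟩
  have humem : u ∈ Subgroup.zpowers v := by
    have hu : u = v⁻¹ * x⁻¹ := by rw [hvdef]; group
    rw [hu]
    exact mul_mem (inv_mem (Subgroup.mem_zpowers v)) (inv_mem hxmem)
  have hgen : ∀ g : G, g ∈ Subgroup.zpowers v := by
    intro g
    refine PresentedGroup.generated_by _ _ ?_ g
    intro j
    fin_cases j
    · exact hxmem
    · exact humem
  -- the homomorphism to ZMod n
  set c0 : ZMod n := ((-(2 * (d₂:ℤ) * b) : ℤ) : ZMod n) with hc0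
  set c1 : ZMod n := (((2 * (d₂:ℤ) * b - 1) : ℤ) : ZMod n) with hc1
  set f : Fin 2 → Multiplicative (ZMod n) :=
    ![Multiplicative.ofAdd c0, Multiplicative.ofAdd c1] with hf
  have hφrel : ∀ r ∈ orbifoldRels d₁ d₂, FreeGroup.lift f r = 1 := by
    intro r hr
    simp only [orbifoldRels, Set.mem_insert_iff, Set.mem_singleton_iff] at hr
    have hcomm1 : ∀ (p q : Multiplicative (ZMod n)), p * q * p⁻¹ * q⁻¹ = 1 := by
      intro p q; rw [mul_comm p q]; group
    rcases hr with rfl | rfl | rfl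
    · simp only [map_mul, map_inv, FreeGroup.lift_apply_of]
      exact hcomm1 _ _
    · simp only [map_pow, FreeGroup.lift_apply_of, hf, Matrix.cons_val_zero]
      rw [← ofAdd_nsmul, ofAdd_eq_one, nsmul_eq_mul, hc0]
      have : ((((d₁ : ℤ) * -(2 * (d₂:ℤ) * b)) : ℤ) : ZMod n) = 0 := by
        rw [ZMod.intCast_zmod_eq_zero_iff_dvd]
        exact ⟨-b, by push_cast [hn]; ring⟩
      push_cast at this ⊢
      linear_combination this
    · simp only [map_pow, map_mul, FreeGroup.lift_apply_of, hf, Matrix.cons_val_zero,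
        Matrix.cons_val_one, Matrix.head_cons]
      rw [← ofAdd_add, ← ofAdd_add, ← ofAdd_nsmul, ofAdd_eq_one, nsmul_eq_mul, hc0, hc1]
      have : ((((d₂ : ℤ) * ((2 * (d₂:ℤ) * b - 1) + -(2 * (d₂:ℤ) * b) + (2 * (d₂:ℤ) * b - 1)))
          : ℤ) : ZMod n) = 0 := by
        rw [ZMod.intCast_zmod_eq_zero_iff_dvd]
        exact ⟨-a, by push_cast [hn]; linear_combination (2 * (d₂:ℤ)) * hbez⟩
      push_cast at this ⊢
      linear_combination this
  set φ : G →* Multiplicative (ZMod n) := PresentedGroup.toGroup hφrel with hφ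
  have hφv : φ v = Multiplicative.ofAdd (1 : ZMod n) := by
    have hφx : φ x = Multiplicative.ofAdd c0 := PresentedGroup.toGroup.of hφrel
    have hφu : φ u = Multiplicative.ofAdd c1 := PresentedGroup.toGroup.of hφrel
    rw [hvdef, map_mul, map_inv, map_inv, hφx, hφu, ← ofAdd_neg, ← ofAdd_neg, ← ofAdd_add]
    congr 1
    rw [hc0, hc1]
    push_cast
    ring
  -- order of v is n
  have hord : orderOf v = n := by
    refine Nat.dvd_antisymm (orderOf_dvd_of_pow_eq_one hvn) ?_
    have hdvd : orderOf (φ v) ∣ orderOf v := orderOf_map_dvd φ v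
    rwa [hφv, show orderOf (Multiplicative.ofAdd (1 : ZMod n)) = addOrderOf (1 : ZMod n) from rfl,
      ZMod.addOrderOf_one] at hdvd
  have hcard : Nat.card G = n := (orderOf_eq_card_of_forall_mem_zpowers hgen).symm.trans hord
  refine ⟨?_, ⟨v, hgen⟩, hcard⟩
  intro p q
  obtain ⟨k, hk⟩ := hgen p
  obtain ⟨m, hm⟩ := hgen q
  rw [← hk, ← hm, ← zpow_add, ← zpow_add, add_comm]
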